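/- arXiv:1901.02234 — 5 statements merged into one kernel-verified Lean document; each statement's English description precedes it below -/
import Mathlib

section
/- For every complex number z with Re(z) > 1/k, ∑_{r≥1} w_k(r)/r^{1+z} = ζ(z+1)·ζ(kz), where ζ is the Riemann zeta function. -/
/-- `wk k r = ∑_{m^k ∣ r} m^k`, sum over positive integers `m` with `m^k ∣ r`. -/
def wk (k r : ℕ) : ℕ := ∑ m ∈ Finset.Icc 1 r, if m ^ k ∣ r then m ^ k else 0

open scoped LSeries.notation

open Classical in
/-- Indicator of `k`-th powers times the identity, as a nat-valued function. -/
noncomputable def wkN (k : ℕ) : ℕ → ℕ := fun n => if ∃ m, n = m ^ k then n else 0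

/-- Indicator of `k`-th powers times the identity. -/
noncomputable def wkF (k : ℕ) : ℕ → ℂ := fun n => ((wkN k n : ℕ) : ℂ)

open Classical in
lemma wk_eq_sum_divisors (k : ℕ) (hk : 1 ≤ k) (r : ℕ) (hr : r ≠ 0) :
    wk k r = ∑ d ∈ r.divisors, wkN k d := by
  have hk0 : k ≠ 0 := by omega
  unfold wk wkN
  rw [← Finset.sum_filter, ← Finset.sum_filter]
  refine Finset.sum_bij (fun m _ => m ^ k) ?_ ?_ ?_ ?_
  · intro m hm
    simp only [Finset.mem_filter, Finset.mem_Icc, Nat.mem_divisors] at hm ⊢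
    exact ⟨⟨hm.2, hr⟩, m, rfl⟩
  · intro a _ b _ h
    exact Nat.pow_left_injective hk0 h
  · intro d hd
    simp only [Finset.mem_filter, Nat.mem_divisors] at hd
    obtain ⟨⟨hdvd, _⟩, m, rfl⟩ := hd
    have hm0 : m ≠ 0 := by
      rintro rfl
      rw [zero_pow hk0] at hdvd
      exact hr (Nat.eq_zero_of_zero_dvd hdvd)
    refine ⟨m, ?_, rfl⟩
    simp only [Finset.mem_filter, Finset.mem_Icc]
    exact ⟨⟨Nat.one_le_iff_ne_zero.mpr hm0,
      le_trans (Nat.le_self_pow hk0 m) (Nat.le_of_dvd (Nat.pos_of_ne_zero hr) hdvd)⟩, hdvd⟩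
  · intros; rfl

lemma wk_eq_conv (k : ℕ) (hk : 1 ≤ k) (r : ℕ) (hr : r ≠ 0) :
    ((wk k r : ℂ)) = (wkF k ⍟ 1) r := by
  rw [LSeries.convolution_def]
  simp only [Pi.one_apply, mul_one]
  rw [Nat.sum_divisorsAntidiagonal (f := fun a _ => wkF k a)]
  rw [wk_eq_sum_divisors k hk r hr]
  push_cast [wkF]
  rfl

theorem wk_dirichlet_series (k : ℕ) (hk : 1 ≤ k) (z : ℂ) (hz : 1 / (k : ℝ) < z.re) :
    ∑' r : ℕ, (wk k (r + 1) : ℂ) / ((r + 1 : ℕ) : ℂ) ^ ((1 : ℂ) + z) =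
      riemannZeta (z + 1) * riemannZeta ((k : ℂ) * z) := by
  classical
  have hk0 : k ≠ 0 := by omega
  have hkpos : (0 : ℝ) < k := by exact_mod_cast (by omega : 0 < k)
  have hzpos : 0 < z.re := lt_trans (by positivity) hz
  have hre1 : 1 < ((1 : ℂ) + z).re := by
    simp only [Complex.add_re, Complex.one_re]
    linarith
  have hrekz : 1 < ((k : ℂ) * z).re := by
    have : ((k : ℂ) * z).re = k * z.re := by
      simp [Complex.mul_re]
    rw [this]
    rw [div_lt_iff₀ hkpos] at hz
    linarith [hz]
  have hkz0 : ((k : ℂ) * z) ≠ 0 := by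
    intro h
    rw [h] at hrekz
    norm_num at hrekz
  -- key pointwise computation for the L-series of wkF
  have hterm : ∀ m : ℕ, LSeries.term (wkF k) (1 + z) (m ^ k) = 1 / (m : ℂ) ^ ((k : ℂ) * z) := by
    intro m
    rcases Nat.eq_zero_or_pos m with rfl | hm
    · rw [zero_pow hk0]
      simp [LSeries.term, Complex.zero_cpow hkz0, wkF, wkN]
    · have hmk : m ^ k ≠ 0 := by positivity
      rw [LSeries.term_def, if_neg hmk]
      have hx : ((m ^ k : ℕ) : ℂ) ≠ 0 := by exact_mod_cast hmk
      rw [wkF, wkN, if_pos ⟨m, rfl⟩]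
      rw [Complex.cpow_add _ _ hx, Complex.cpow_one]
      rw [div_mul_eq_div_div, div_self hx]
      congr 1
      push_cast
      exact (Complex.natCast_cpow_natCast_mul m k z).symm
  have hinj : Function.Injective (fun m : ℕ => m ^ k) := Nat.pow_left_injective hk0
  have hsupp : ∀ n, n ∉ Set.range (fun m : ℕ => m ^ k) → LSeries.term (wkF k) (1 + z) n = 0 := by
    intro n hn
    have hn0 : n ≠ 0 := by
      rintro rfl
      exact hn ⟨0, by simp [zero_pow hk0]⟩
    rw [LSeries.term_def, if_neg hn0, wkF, wkN, if_neg, Nat.cast_zero, zero_div]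
    rintro ⟨m, rfl⟩
    exact hn ⟨m, rfl⟩
  have hsupp' : Function.support (LSeries.term (wkF k) (1 + z)) ⊆
      Set.range (fun m : ℕ => m ^ k) :=
    Function.support_subset_iff'.mpr hsupp
  have hsummableKZ : Summable fun m : ℕ => 1 / (m : ℂ) ^ ((k : ℂ) * z) :=
    (Complex.summable_one_div_nat_cpow).mpr hrekz
  have hFsummable : LSeriesSummable (wkF k) (1 + z) := by
    rw [LSeriesSummable]
    rw [← Function.Injective.summable_iff hinj hsupp]
    exact hsummableKZ.congr fun m => (hterm m).symm
  have hFval : LSeries (wkF k) (1 + z) = riemannZeta ((k : ℂ) * z) := by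
    rw [LSeries, ← Function.Injective.tsum_eq hinj hsupp',
      zeta_eq_tsum_one_div_nat_cpow hrekz]
    exact tsum_congr hterm
  have h1summable : LSeriesSummable 1 (1 + z) := LSeriesSummable_one_iff.mpr hre1
  have hconvsummable : LSeriesSummable (wkF k ⍟ 1) (1 + z) :=
    hFsummable.convolution h1summable
  have hLHS : ∑' r : ℕ, (wk k (r + 1) : ℂ) / ((r + 1 : ℕ) : ℂ) ^ ((1 : ℂ) + z)
      = LSeries (wkF k ⍟ 1) (1 + z) := by
    rw [LSeries, Summable.tsum_eq_zero_add hconvsummable]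
    rw [LSeries.term_def, if_pos rfl, zero_add]
    refine tsum_congr fun r => ?_
    rw [LSeries.term_def, if_neg (Nat.succ_ne_zero r),
      ← wk_eq_conv k hk (r + 1) (Nat.succ_ne_zero r)]
  rw [hLHS, LSeries_convolution' hFsummable h1summable, hFval,
    LSeries_one_eq_riemannZeta hre1, add_comm (1 : ℂ) z, mul_comm]
end

section
/- There exist positive constants c and C (depending only on k) such that for all integers n ≥ 1, c/n ≤ σ_n ≤ C·n^{-1/3}, where σ_n is the unique positive real with ∑_{r≥1} w_k(r) e^{-r σ_n} = n. -/
lemma one_le_wk (k r : ℕ) (hr : 1 ≤ r) : 1 ≤ wk k r := by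
  unfold wk
  have h1 : (1:ℕ) ∈ Finset.Icc 1 r := by simp [hr]
  calc (1:ℕ) = (if (1:ℕ)^k ∣ r then 1^k else 0) := by simp
    _ ≤ _ := Finset.single_le_sum (f := fun m => if m^k ∣ r then m^k else 0)
        (fun i _ => Nat.zero_le _) h1

lemma wk_le_sq (k r : ℕ) (hr : 1 ≤ r) : wk k r ≤ r^2 := by
  unfold wk
  calc (∑ m ∈ Finset.Icc 1 r, if m ^ k ∣ r then m ^ k else 0)
      ≤ ∑ m ∈ Finset.Icc 1 r, r := by
        apply Finset.sum_le_sum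
        intro i _
        split
        · exact Nat.le_of_dvd hr ‹_›
        · exact Nat.zero_le _
    _ = r * r := by simp [Nat.card_Icc, Nat.mul_comm]
    _ = r^2 := (sq r).symm

set_option maxHeartbeats 1000000 in
theorem saddle_point_bounds (k : ℕ) (hk : 1 ≤ k) (σ : ℕ → ℝ)
    (hσ : ∀ n : ℕ, 1 ≤ n → 0 < σ n ∧
      ∑' r : ℕ, (wk k (r + 1) : ℝ) * Real.exp (-((r + 1 : ℕ) : ℝ) * σ n) = n) :
    ∃ c C : ℝ, 0 < c ∧ 0 < C ∧ ∀ n : ℕ, 1 ≤ n →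
      c / n ≤ σ n ∧ σ n ≤ C * (n : ℝ) ^ (-(1 : ℝ) / 3) := by
  refine ⟨1/2, 4, by norm_num, by norm_num, fun n hn => ?_⟩
  obtain ⟨hs, hsum⟩ := hσ n hn
  set s := σ n with hsdef
  have hn1 : (1:ℝ) ≤ n := by exact_mod_cast hn
  have hn0 : (0:ℝ) < n := by linarith
  have hfsum : Summable (fun r : ℕ => (wk k (r+1) : ℝ) * Real.exp (-((r + 1 : ℕ) : ℝ) * s)) := by
    by_contra h
    rw [tsum_eq_zero_of_not_summable h] at hsum
    linarith
  set x := Real.exp (-s) with hx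
  have hx0 : 0 < x := Real.exp_pos _
  have hx1 : x < 1 := by
    rw [hx, Real.exp_lt_one_iff]; linarith
  have hexp_eq : ∀ r : ℕ, Real.exp (-((r + 1 : ℕ) : ℝ) * s) = x ^ (r+1) := by
    intro r
    rw [hx, ← Real.exp_nat_mul]
    ring_nf
  -- lower bound
  have hgsum : Summable (fun r : ℕ => x ^ (r+1)) := by
    simpa [pow_succ] using (summable_geometric_of_lt_one hx0.le hx1).mul_right x
  have hgeo_le : ∑' r : ℕ, x ^ (r+1) ≤ (n:ℝ) := by
    rw [← hsum]
    apply Summable.tsum_le_tsum _ hgsum hfsum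
    intro r
    rw [hexp_eq r]
    have h1 : (1:ℝ) ≤ (wk k (r+1) : ℝ) := by
      exact_mod_cast one_le_wk k (r+1) (Nat.le_add_left 1 r)
    nlinarith [pow_pos hx0 (r+1)]
  have hgeo_val : ∑' r : ℕ, x ^ (r+1) = (1 - x)⁻¹ * x := by
    calc ∑' r : ℕ, x ^ (r+1) = ∑' r : ℕ, x ^ r * x := by
          apply tsum_congr; intro r; rw [pow_succ]
      _ = (∑' r : ℕ, x ^ r) * x := tsum_mul_right
      _ = (1 - x)⁻¹ * x := by rw [tsum_geometric_of_lt_one hx0.le hx1]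
  have hxn : x ≤ n * (1 - x) := by
    rw [hgeo_val] at hgeo_le
    have h1x : 0 < 1 - x := by linarith
    calc x = (1 - x)⁻¹ * x * (1 - x) := by field_simp
      _ ≤ n * (1 - x) := by nlinarith
  have h1xs : 1 - x ≤ s := by
    have := Real.add_one_le_exp (-s)
    rw [← hx] at this; linarith
  have lower : 1/2 / (n:ℝ) ≤ s := by
    rcases le_or_gt s (1/2) with h | h
    · have hxge : 1/2 ≤ x := by
        have := Real.add_one_le_exp (-s)
        rw [← hx] at this; linarith
      rw [div_le_iff₀ hn0]
      nlinarith
    · have : 1/2 / (n:ℝ) ≤ 1/2 := by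
        rw [div_le_iff₀ hn0]; nlinarith
      linarith
  refine ⟨lower, ?_⟩
  -- upper bound
  set y := Real.exp (-(s/2)) with hy
  have hy0 : 0 < y := Real.exp_pos _
  have hy1 : y < 1 := by rw [hy, Real.exp_lt_one_iff]; linarith
  have hs2 : (0:ℝ) < s^2 := by positivity
  have key : ∀ r : ℕ, (wk k (r+1) : ℝ) * Real.exp (-((r + 1 : ℕ) : ℝ) * s)
      ≤ (16 / s^2) * y ^ (r+1) := by
    intro r
    have hw : (wk k (r+1) : ℝ) ≤ ((r+1:ℕ):ℝ)^2 := by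
      exact_mod_cast wk_le_sq k (r+1) (Nat.le_add_left 1 r)
    set t : ℝ := ((r+1:ℕ):ℝ) * (s/2) with ht
    have ht0 : 0 ≤ t := by positivity
    have ht4 : t^2 ≤ 4 * Real.exp t := by
      have h2 := Real.add_one_le_exp (t/2)
      have : Real.exp t = Real.exp (t/2) * Real.exp (t/2) := by
        rw [← Real.exp_add]; ring_nf
      nlinarith [Real.exp_pos (t/2)]
    -- (r+1)^2 ≤ 16/s^2 * exp t
    have hr2 : ((r+1:ℕ):ℝ)^2 ≤ 16 / s^2 * Real.exp t := by
      rw [div_mul_eq_mul_div, le_div_iff₀ hs2]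
      nlinarith
    have hyp : y ^ (r+1) = Real.exp (-t) := by
      rw [hy, ← Real.exp_nat_mul, ht]; ring_nf
    have hee : Real.exp (-((r + 1 : ℕ) : ℝ) * s) = Real.exp (-t) * Real.exp (-t) := by
      rw [← Real.exp_add]
      congr 1
      rw [ht]; push_cast; ring
    rw [hee, hyp]
    have he0 : (0:ℝ) ≤ Real.exp (-t) * Real.exp (-t) := by positivity
    calc (wk k (r+1) : ℝ) * (Real.exp (-t) * Real.exp (-t))
        ≤ (16 / s^2 * Real.exp t) * (Real.exp (-t) * Real.exp (-t)) :=
          mul_le_mul_of_nonneg_right (hw.trans hr2) he0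
      _ = (16 / s^2) * (Real.exp t * (Real.exp (-t) * Real.exp (-t))) := by ring
      _ = (16 / s^2) * Real.exp (-t) := by
          rw [← Real.exp_add, ← Real.exp_add]; ring_nf
  have hgsum2 : Summable (fun r : ℕ => (16 / s^2) * y ^ (r+1)) := by
    apply Summable.mul_left
    simpa [pow_succ] using (summable_geometric_of_lt_one hy0.le hy1).mul_right y
  have hub : (n:ℝ) ≤ 32 / s^3 := by
    have h1 : (n:ℝ) ≤ ∑' r : ℕ, (16 / s^2) * y ^ (r+1) := by
      rw [← hsum]
      exact Summable.tsum_le_tsum key hfsum hgsum2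
    have h2 : ∑' r : ℕ, (16 / s^2) * y ^ (r+1) = (16 / s^2) * ((1 - y)⁻¹ * y) := by
      rw [tsum_mul_left]
      congr 1
      calc ∑' r : ℕ, y ^ (r+1) = ∑' r : ℕ, y ^ r * y := by
            apply tsum_congr; intro r; rw [pow_succ]
        _ = (∑' r : ℕ, y ^ r) * y := tsum_mul_right
        _ = (1 - y)⁻¹ * y := by rw [tsum_geometric_of_lt_one hy0.le hy1]
    have h1y : 0 < 1 - y := by linarith
    have hyy : (1 - y)⁻¹ * y ≤ 2 / s := by
      rw [inv_mul_eq_div, div_le_div_iff₀ h1y hs]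
      -- y * s ≤ 2 * (1 - y)  ⟺  (s/2) y ≤ 1 - y
      have he := Real.add_one_le_exp (s/2)
      have hmul : (s/2 + 1) * y ≤ Real.exp (s/2) * y :=
        mul_le_mul_of_nonneg_right he hy0.le
      have hey : Real.exp (s/2) * y = 1 := by
        rw [hy, ← Real.exp_add]; simp
      nlinarith [hmul, hey]
    rw [h2] at h1
    calc (n:ℝ) ≤ (16 / s^2) * ((1 - y)⁻¹ * y) := h1
      _ ≤ (16 / s^2) * (2 / s) := by
          apply mul_le_mul_of_nonneg_left hyy (by positivity)
      _ = 32 / s^3 := by field_simp; ring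
  -- conclude σ ≤ 4 n^{-1/3}
  have hR0 : (0:ℝ) ≤ 4 * (n:ℝ) ^ (-(1:ℝ)/3) := by positivity
  have hcube : s^3 ≤ (4 * (n:ℝ) ^ (-(1:ℝ)/3))^3 := by
    have hrw : ((n:ℝ) ^ (-(1:ℝ)/3))^(3:ℕ) = (n:ℝ)⁻¹ := by
      rw [← Real.rpow_natCast ((n:ℝ) ^ (-(1:ℝ)/3)) 3, ← Real.rpow_mul hn0.le]
      norm_num
      exact Real.rpow_neg_one _
    have : (4 * (n:ℝ) ^ (-(1:ℝ)/3))^3 = 64 * (n:ℝ)⁻¹ := by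
      rw [mul_pow, hrw]; norm_num
    rw [this]
    have hs3 : 0 < s^3 := by positivity
    have h32 : (n:ℝ) * s^3 ≤ 32 := by
      rw [le_div_iff₀ hs3] at hub; linarith
    rw [show (64:ℝ) * (n:ℝ)⁻¹ = 64 / n by ring, le_div_iff₀ hn0]
    nlinarith [hs3]
  exact le_of_pow_le_pow_left₀ (by norm_num) hR0 hcube
end

section
/- For all real σ > 0 and all real τ, |F_k(σ+iτ)|² ≤ |F_k(σ)|² · ∏_{m≥1} (1 + 16 ‖m^k τ/(2π)‖² / (e^{m^k σ}(1 - e^{-m^k σ})²))^{-1}, where F_k(s) = ∏_{m≥1}(1 - e^{-m^k s})^{-1}. -/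
open Complex

/-- Distance from a real number to the nearest integer. -/
noncomputable def distNearestInt (x : ℝ) : ℝ := |x - round x|

/-- `F_k(s) = ∏_{m ≥ 1} (1 - e^{-m^k s})⁻¹`. -/
noncomputable def Fk (k : ℕ) (s : ℂ) : ℂ :=
  ∏' m : ℕ, (1 - Complex.exp (-((m + 1 : ℕ) : ℂ) ^ k * s))⁻¹

/-- `Complex.abs` as a monoid homomorphism. -/
noncomputable def myAbsHom : ℂ →* ℝ :=
  { toFun := fun z => ‖z‖, map_one' := norm_one, map_mul' := norm_mul }

lemma multipliable_of_summable_norm_sub_one {f : ℕ → ℂ} (h0 : ∀ n, f n ≠ 0)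
    (h : Summable (fun n => ‖f n - 1‖)) : Multipliable f := by
  have hlog : Summable (fun n => Complex.log (f n)) := by
    apply Summable.of_norm_bounded_eventually (g := fun n => (3/2) * ‖f n - 1‖) (h.mul_left _)
    have hev : ∀ᶠ n in Filter.cofinite, ‖f n - 1‖ ≤ 1/2 :=
      h.tendsto_cofinite_zero.eventually_le_const (by norm_num)
    filter_upwards [hev] with n hn
    have := Complex.norm_log_one_add_half_le_self (z := f n - 1) hn
    simpa using this
  exact Complex.multipliable_of_summable_log hlog

lemma multipliable_of_pos_of_summable_log {f : ℕ → ℝ} (h0 : ∀ n, 0 < f n)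
    (h : Summable (fun n => Real.log (f n))) : Multipliable f :=
  Real.multipliable_of_summable_log h0 h

open Real in
lemma jordan_dist (θ : ℝ) :
    8 * distNearestInt (θ / (2*π)) ^ 2 ≤ 1 - Real.cos θ := by
  unfold distNearestInt
  set y : ℝ := θ / (2*π) - round (θ / (2*π)) with hy
  have hπ := Real.pi_pos
  have hθ : θ = 2*π*y + (round (θ / (2*π)) : ℤ) * (2*π) := by
    rw [hy]; field_simp; ring
  have hcos : Real.cos θ = Real.cos (2*π*y) := by
    rw [hθ, Real.cos_add_int_mul_two_pi]
  have hy2 : |y| ≤ 1/2 := abs_sub_round _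
  have hsin : 2 * |y| ≤ Real.sin (π * |y|) := by
    have := Real.mul_le_sin (x := π * |y|) (by positivity) (by nlinarith [abs_nonneg y])
    calc 2 * |y| = 2/π * (π * |y|) := by field_simp
    _ ≤ _ := this
  have hsin2 : Real.sin (π * |y|) ^ 2 = Real.sin (π * y) ^ 2 := by
    rcases abs_cases y with ⟨h, _⟩ | ⟨h, _⟩ <;> rw [h] <;> simp [mul_neg]
  have hc2 : Real.cos (2*π*y) = 1 - 2 * Real.sin (π*y)^2 := by
    have h2 := Real.sin_sq_add_cos_sq (π*y)
    have h3 : Real.cos (2*(π*y)) = 2 * Real.cos (π*y)^2 - 1 := Real.cos_two_mul _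
    calc Real.cos (2*π*y) = Real.cos (2*(π*y)) := by ring_nf
    _ = _ := by nlinarith
  have h8 : 8 * |y|^2 ≤ 2 * Real.sin (π*y)^2 := by
    nlinarith [abs_nonneg y, hsin, hsin2,
      Real.sin_nonneg_of_nonneg_of_le_pi (x := π*|y|) (by positivity) (by nlinarith [abs_nonneg y])]
  rw [hcos, hc2]; linarith

set_option maxHeartbeats 1000000 in
theorem Fk_ratio_bound (k : ℕ) (hk : 1 ≤ k) (σ : ℝ) (hσ : 0 < σ) (τ : ℝ) :
    ‖Fk k ((σ : ℂ) + τ * Complex.I)‖ ^ 2 ≤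
      ‖Fk k (σ : ℂ)‖ ^ 2 *
        ∏' m : ℕ,
          (1 + 16 * distNearestInt (((m + 1 : ℕ) : ℝ) ^ k * τ / (2 * Real.pi)) ^ 2 /
              (Real.exp (((m + 1 : ℕ) : ℝ) ^ k * σ) *
                (1 - Real.exp (-((m + 1 : ℕ) : ℝ) ^ k * σ)) ^ 2))⁻¹ := by
  set s : ℂ := (σ : ℂ) + τ * Complex.I with hs_def
  have hs_re : s.re = σ := by simp [hs_def]
  -- real weights
  set r : ℕ → ℝ := fun m => ((m + 1 : ℕ) : ℝ) ^ k with hr_def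
  set x : ℕ → ℝ := fun m => Real.exp (-(r m * σ)) with hx_def
  have hr1 : ∀ m, (1 : ℝ) ≤ r m := fun m =>
    one_le_pow₀ (by exact_mod_cast Nat.one_le_iff_ne_zero.mpr (Nat.succ_ne_zero m))
  have hxpos : ∀ m, 0 < x m := fun m => Real.exp_pos _
  have hxeq : ∀ m, Real.exp (-(r m * σ)) = x m := fun _ => rfl
  have hinveq : ∀ m, Real.exp (r m * σ) = (x m)⁻¹ := by
    intro m
    rw [← hxeq m, Real.exp_neg, inv_inv]
  have hxlt : ∀ m, x m ≤ Real.exp (-σ) := fun m =>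
    Real.exp_le_exp.mpr (by nlinarith [hr1 m])
  have hxlt1 : ∀ m, x m < 1 :=
    fun m => lt_of_le_of_lt (hxlt m) (Real.exp_lt_one_iff.mpr (by linarith))
  have h1x : ∀ m, (0:ℝ) < 1 - x m := fun m => by linarith [hxlt1 m]
  have heσ : Real.exp (-σ) < 1 := Real.exp_lt_one_iff.mpr (by linarith)
  have hd0 : (0:ℝ) < 1 - Real.exp (-σ) := by linarith
  -- summability of x
  have hSx : Summable x := by
    have hgeo : Summable (fun m : ℕ => Real.exp (-σ) ^ (m + 1)) :=
      (summable_geometric_of_lt_one (Real.exp_nonneg _) heσ).comp_injective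
        (add_left_injective 1)
    apply Summable.of_nonneg_of_le (fun m => (hxpos m).le) _ hgeo
    intro m
    rw [← Real.exp_nat_mul]
    apply Real.exp_le_exp.mpr
    have h1 : ((m + 1 : ℕ) : ℝ) ≤ r m :=
      le_self_pow₀ (by exact_mod_cast Nat.one_le_iff_ne_zero.mpr (Nat.succ_ne_zero m)) (by omega)
    nlinarith [h1]
  -- cast lemma
  have hcast : ∀ m : ℕ, ((m + 1 : ℕ) : ℂ) ^ k = ((r m : ℝ) : ℂ) := by
    intro m; rw [hr_def]; push_cast; ring
  clear_value s r x
  -- abs of exponentials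
  have habs : ∀ (m : ℕ) (z : ℂ), z.re = σ →
      ‖Complex.exp (-((m + 1 : ℕ) : ℂ) ^ k * z)‖ = x m := by
    intro m z hz
    rw [Complex.norm_exp, ← hxeq m]
    congr 1
    rw [hcast m, neg_mul, Complex.neg_re, Complex.re_ofReal_mul, hz]
  -- nonvanishing
  have hne : ∀ (m : ℕ) (z : ℂ), z.re = σ →
      1 - Complex.exp (-((m + 1 : ℕ) : ℂ) ^ k * z) ≠ 0 := by
    intro m z hz h
    have h1 : Complex.exp (-((m + 1 : ℕ) : ℂ) ^ k * z) = 1 := by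
      rwa [sub_eq_zero, eq_comm] at h
    have h2 := habs m z hz
    rw [h1] at h2
    simp at h2
    exact absurd (h2 ▸ hxlt1 m) (lt_irrefl _)
  -- the complex factors
  set f : ℕ → ℂ := fun m => (1 - Complex.exp (-((m + 1 : ℕ) : ℂ) ^ k * s))⁻¹ with hf_def
  set g : ℕ → ℂ := fun m => (1 - Complex.exp (-((m + 1 : ℕ) : ℂ) ^ k * (σ : ℂ)))⁻¹ with hg_def
  have hσre : ((σ : ℂ)).re = σ := by simp
  clear_value f g
  -- multipliability of complex factors
  have hmult : ∀ z : ℂ, z.re = σ →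
      Multipliable (fun m => (1 - Complex.exp (-((m + 1 : ℕ) : ℂ) ^ k * z))⁻¹) := by
    intro z hz
    apply multipliable_of_summable_norm_sub_one (fun m => inv_ne_zero (hne m z hz))
    have hb : ∀ m : ℕ, ‖(1 - Complex.exp (-((m + 1 : ℕ) : ℂ) ^ k * z))⁻¹ - 1‖ ≤
        (1 - Real.exp (-σ))⁻¹ * x m := by
      intro m
      set w := Complex.exp (-((m + 1 : ℕ) : ℂ) ^ k * z) with hw
      have hwabs : ‖w‖ = x m := habs m z hz
      have hden : (1 : ℝ) - x m ≤ ‖(1:ℂ) - w‖ := by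
        have h0 : ‖(1:ℂ)‖ - ‖w‖ ≤ ‖(1:ℂ) - w‖ := norm_sub_norm_le _ _
        have h1 : ‖w‖ = x m := hwabs
        simpa [h1] using h0
      have hinv : (1 - w)⁻¹ - 1 = w * (1 - w)⁻¹ := by
        field_simp [hne m z hz]
        rw [div_sub_one (hne m z hz)]; ring
      rw [hinv, norm_mul, norm_inv]
      have h2 : ‖(1 : ℂ) - w‖⁻¹ ≤ (1 - x m)⁻¹ := inv_anti₀ (h1x m) hden
      have h3 : ‖w‖ = x m := hwabs
      calc ‖w‖ * ‖(1:ℂ) - w‖⁻¹ ≤ x m * (1 - x m)⁻¹ := by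
            rw [h3]; exact mul_le_mul_of_nonneg_left h2 (hxpos m).le
      _ ≤ (1 - Real.exp (-σ))⁻¹ * x m := by
            rw [mul_comm]
            apply mul_le_mul_of_nonneg_right _ (hxpos m).le
            exact inv_anti₀ hd0 (by linarith [hxlt m])
    exact Summable.of_nonneg_of_le (fun m => norm_nonneg _) hb (hSx.mul_left _)
  have Mf : Multipliable f := by rw [hf_def]; exact hmult s hs_re
  have Mg : Multipliable g := by rw [hg_def]; exact hmult (σ : ℂ) hσre
  have hFk_f : Fk k s = ∏' m, f m := by rw [hf_def]; rfl
  have hFk_g : Fk k (σ:ℂ) = ∏' m, g m := by rw [hg_def]; rfl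
  -- RHS real factors
  set C : ℕ → ℝ := fun m =>
    (1 + 16 * distNearestInt (r m * τ / (2 * Real.pi)) ^ 2 /
      (Real.exp (r m * σ) * (1 - Real.exp (-(r m * σ))) ^ 2))⁻¹ with hC_def
  clear_value C
  have hd2 : ∀ m, distNearestInt (r m * τ / (2 * Real.pi)) ^ 2 ≤ (1/2)^2 := by
    intro m
    have h1 : |distNearestInt (r m * τ / (2 * Real.pi))| ≤ 1/2 := by
      rw [distNearestInt, _root_.abs_abs]; exact abs_sub_round _
    calc distNearestInt (r m * τ / (2 * Real.pi)) ^ 2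
        = |distNearestInt (r m * τ / (2 * Real.pi))| ^ 2 := (_root_.sq_abs _).symm
    _ ≤ (1/2)^2 := by nlinarith [abs_nonneg (distNearestInt (r m * τ / (2 * Real.pi)))]
  -- a simplified form of the RHS factors
  have hC_eq : ∀ m, C m =
      (1 + 16 * distNearestInt (r m * τ / (2 * Real.pi)) ^ 2 * x m / (1 - x m)^2)⁻¹ := by
    intro m
    simp only [hC_def]
    rw [hinveq m, hxeq m]
    congr 1
    congr 1
    have hx0 : x m ≠ 0 := (hxpos m).ne'
    have h1xne : (1:ℝ) - x m ≠ 0 := (h1x m).ne'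
    rw [div_eq_div_iff (mul_pos (inv_pos.mpr (hxpos m)) (pow_pos (h1x m) 2)).ne'
      (pow_pos (h1x m) 2).ne']
    field_simp
  have hcnonneg : ∀ m, 0 ≤ 16 * distNearestInt (r m * τ / (2 * Real.pi)) ^ 2 * x m
      / (1 - x m)^2 := by
    intro m
    have := sq_nonneg (distNearestInt (r m * τ / (2 * Real.pi)))
    have := hxpos m
    have := h1x m
    positivity
  have hcbound : ∀ m, 16 * distNearestInt (r m * τ / (2 * Real.pi)) ^ 2 * x m / (1 - x m)^2
      ≤ (4 / (1 - Real.exp (-σ))^2) * x m := by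
    intro m
    rw [div_le_iff₀ (pow_pos (h1x m) 2)]
    have hden : (1 - Real.exp (-σ))^2 ≤ (1 - x m)^2 := by
      nlinarith [hxlt m, hxlt1 m]
    have key : 4 / (1 - Real.exp (-σ))^2 * x m * (1 - x m)^2
        = 4 * ((1 - x m)^2 / (1 - Real.exp (-σ))^2) * x m := by
      have : (1 - Real.exp (-σ)) ≠ 0 := hd0.ne'
      field_simp
    rw [key]
    have h4 : (1:ℝ) ≤ (1 - x m)^2 / (1 - Real.exp (-σ))^2 := by
      rw [le_div_iff₀ (pow_pos hd0 2)]
      linarith [hden]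
    nlinarith [hd2 m, hxpos m, sq_nonneg (distNearestInt (r m * τ / (2 * Real.pi)))]
  have hCpos : ∀ m, 0 < C m := by
    intro m
    rw [hC_eq m]
    have := hcnonneg m
    positivity
  -- multipliability of C
  have MC : Multipliable C := by
    apply multipliable_of_pos_of_summable_log hCpos
    have hbound : ∀ m, |Real.log (C m)| ≤ (4 / (1 - Real.exp (-σ))^2) * x m := by
      intro m
      set c := 16 * distNearestInt (r m * τ / (2 * Real.pi)) ^ 2 * x m / (1 - x m)^2 with hc
      have hc0 : 0 ≤ c := hcnonneg m
      have hlog : Real.log (C m) = -Real.log (1 + c) := by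
        rw [hC_eq m, ← hc, Real.log_inv]
      rw [hlog, _root_.abs_neg, _root_.abs_of_nonneg (Real.log_nonneg (by linarith))]
      have h1 : Real.log (1 + c) ≤ c := by
        have h2 := Real.add_one_le_exp (Real.log (1+c))
        have h3 := Real.exp_log (show (0:ℝ) < 1 + c by linarith)
        linarith
      exact h1.trans (hc ▸ hcbound m)
    apply Summable.of_norm_bounded (hSx.mul_left _) hbound
  -- express abs squared of the tprods
  have sq_tprod : ∀ {h : ℕ → ℂ}, Multipliable h →
      ‖∏' m, h m‖ ^ 2 = ∏' m, ‖h m‖ ^ 2 := by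
    intro h Mh
    have h1 : ‖∏' m, h m‖ = ∏' m, ‖h m‖ :=
      Mh.map_tprod myAbsHom continuous_norm
    have Mabs : Multipliable (fun m => ‖h m‖) :=
      Mh.map myAbsHom continuous_norm
    have h2 : (∏' m, ‖h m‖) ^ 2 = ∏' m, ‖h m‖ ^ 2 := by
      have := Mabs.map_tprod (powMonoidHom 2 : ℝ →* ℝ) (continuous_pow 2)
      simpa [powMonoidHom_apply] using this
    rw [h1, h2]
  have hA : ‖Fk k s‖ ^ 2 = ∏' m, ‖f m‖ ^ 2 := by
    rw [hFk_f]; exact sq_tprod Mf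
  have hB : ‖Fk k (σ:ℂ)‖ ^ 2 = ∏' m, ‖g m‖ ^ 2 := by
    rw [hFk_g]; exact sq_tprod Mg
  have MA : Multipliable (fun m => ‖f m‖ ^ 2) :=
    (Mf.map myAbsHom continuous_norm).map (powMonoidHom 2 : ℝ →* ℝ) (continuous_pow 2)
  have MB : Multipliable (fun m => ‖g m‖ ^ 2) :=
    (Mg.map myAbsHom continuous_norm).map (powMonoidHom 2 : ℝ →* ℝ) (continuous_pow 2)
  -- pointwise key inequality
  have key : ∀ m, ‖f m‖ ^ 2 ≤ ‖g m‖ ^ 2 * C m := by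
    intro m
    set θ := r m * τ with hθ
    set d := distNearestInt (r m * τ / (2 * Real.pi)) with hd
    clear_value θ d
    -- compute abs (g m)
    have hg_eq : ‖g m‖ = (1 - x m)⁻¹ := by
      simp only [hg_def]
      rw [norm_inv]
      congr 1
      have hz : (-((m + 1 : ℕ) : ℂ) ^ k * (σ : ℂ)) = ((-(r m * σ) : ℝ) : ℂ) := by
        rw [hcast m]; push_cast; ring
      rw [hz, ← Complex.ofReal_exp, ← Complex.ofReal_one, ← Complex.ofReal_sub,
        Complex.norm_real, Real.norm_eq_abs, hxeq m]
      exact _root_.abs_of_nonneg (by linarith [h1x m])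
    -- compute abs (f m) squared
    have hf_eq : ‖f m‖ ^ 2 = (1 - 2 * x m * Real.cos θ + x m ^ 2)⁻¹ := by
      simp only [hf_def]
      rw [norm_inv, inv_pow]
      congr 1
      rw [Complex.sq_norm, Complex.normSq_apply]
      have hre : (-((m + 1 : ℕ) : ℂ) ^ k * s).re = -(r m * σ) := by
        rw [hcast m, neg_mul, Complex.neg_re, Complex.re_ofReal_mul, hs_re]
      have him : (-((m + 1 : ℕ) : ℂ) ^ k * s).im = -θ := by
        rw [hcast m, neg_mul, Complex.neg_im, Complex.im_ofReal_mul, hs_def]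
        simp [hθ]
      rw [Complex.sub_re, Complex.sub_im, Complex.one_re, Complex.one_im,
        Complex.exp_re, Complex.exp_im, hre, him, hxeq m, Real.cos_neg, Real.sin_neg]
      have hpyth := Real.sin_sq_add_cos_sq θ
      linear_combination (x m)^2 * hpyth
    rw [hg_eq, hf_eq, hC_eq m, ← hd]
    have hjord : 8 * d ^ 2 ≤ 1 - Real.cos θ := by
      rw [hd, hθ]
      exact jordan_dist (r m * τ)
    have hu : (0:ℝ) < 1 - 2 * x m * Real.cos θ + x m ^ 2 := by
      nlinarith [Real.neg_one_le_cos θ, Real.cos_le_one θ, hxpos m, hxlt1 m]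
    have hv : (0:ℝ) < (1 - x m)^2 + 16 * d^2 * x m := by
      nlinarith [sq_nonneg d, hxpos m, h1x m]
    have hrhs : ((1 - x m)⁻¹)^2 * (1 + 16 * d ^ 2 * x m / (1 - x m)^2)⁻¹
        = ((1 - x m)^2 + 16 * d^2 * x m)⁻¹ := by
      rw [inv_pow, ← mul_inv]
      congr 1
      have h1xne : (1 - x m) ≠ 0 := (h1x m).ne'
      field_simp
    rw [hrhs]
    apply inv_anti₀ hv
    nlinarith [hxpos m, hjord]
  -- assemble
  have hfinal : (∏' m, ‖f m‖ ^ 2) ≤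
      (∏' m, ‖g m‖ ^ 2) * ∏' m, C m := by
    have hRHS : (∏' m, ‖g m‖ ^ 2) * ∏' m, C m
        = ∏' m, (‖g m‖ ^ 2 * C m) := (MB.tprod_mul MC).symm
    rw [hRHS]
    refine le_of_tendsto_of_tendsto' MA.hasProd (MB.mul MC).hasProd ?_
    intro S
    apply Finset.prod_le_prod
    · intro i _; positivity
    · intro i _; exact key i
  have hmatch : ∀ m : ℕ,
      (1 + 16 * distNearestInt (((m + 1 : ℕ) : ℝ) ^ k * τ / (2 * Real.pi)) ^ 2 /
        (Real.exp (((m + 1 : ℕ) : ℝ) ^ k * σ) *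
          (1 - Real.exp (-((m + 1 : ℕ) : ℝ) ^ k * σ)) ^ 2))⁻¹ = C m := by
    intro m
    simp only [hC_def, hr_def, neg_mul]
  calc ‖Fk k s‖ ^ 2 = ∏' m, ‖f m‖ ^ 2 := hA
  _ ≤ (∏' m, ‖g m‖ ^ 2) * ∏' m, C m := hfinal
  _ = ‖Fk k (σ:ℂ)‖ ^ 2 * ∏' m, C m := by rw [hB]
  _ = _ := by rw [tprod_congr hmatch]
end

section
/- There exists a constant c > 0 depending only on k such that for all sufficiently large n and all τ with |τ| ≤ 2πσ_n, |F_k(σ_n + iτ)| ≤ |F_k(σ_n)| · exp(−c τ² σ_n^{−(2+1/k)}). -/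
open Complex Real

namespace FkAux

lemma wk_le_sq (k r : ℕ) : wk k r ≤ r ^ 2 := by
  rcases Nat.eq_zero_or_pos r with rfl | hr
  · simp [wk]
  · unfold wk
    calc ∑ m ∈ Finset.Icc 1 r, (if m ^ k ∣ r then m ^ k else 0)
        ≤ ∑ _m ∈ Finset.Icc 1 r, r := by
          refine Finset.sum_le_sum fun m _ => ?_
          split_ifs with h
          · exact Nat.le_of_dvd hr h
          · exact Nat.zero_le r
      _ = r * r := by rw [Finset.sum_const, Nat.card_Icc]; simp [Nat.mul_comm]
      _ = r ^ 2 := (sq r).symm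

lemma exp_le_one_add_two_mul {v : ℝ} (h0 : 0 ≤ v) (h1 : v ≤ 1) :
    Real.exp v ≤ 1 + 2 * v := by
  have h := convexOn_exp.2 (Set.mem_univ (0 : ℝ)) (Set.mem_univ (1 : ℝ))
    (by linarith : (0:ℝ) ≤ 1 - v) h0 (by ring)
  simp only [smul_eq_mul, mul_zero, mul_one, zero_add, Real.exp_zero] at h
  have he : Real.exp 1 < 2.7182818286 := Real.exp_one_lt_d9
  nlinarith

lemma normSq_eq (b σ τ : ℝ) :
    (‖1 - Complex.exp (-(b : ℂ) * ((σ : ℂ) + (τ : ℂ) * Complex.I))‖) ^ 2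
      = (1 - Real.exp (-(b * σ))) ^ 2
        + 2 * Real.exp (-(b * σ)) * (1 - Real.cos (b * τ)) := by
  have hre : (-(b : ℂ) * ((σ : ℂ) + (τ : ℂ) * Complex.I)).re = -(b * σ) := by simp
  have him : (-(b : ℂ) * ((σ : ℂ) + (τ : ℂ) * Complex.I)).im = -(b * τ) := by simp
  rw [Complex.sq_norm, Complex.normSq_apply, Complex.sub_re, Complex.sub_im, Complex.one_re,
    Complex.one_im, Complex.exp_re, Complex.exp_im, hre, him, Real.cos_neg, Real.sin_neg]
  have h := Real.sin_sq_add_cos_sq (b * τ)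
  linear_combination Real.exp (-(b * σ)) ^ 2 * h

lemma one_sub_exp_pos {b σ : ℝ} (hb : 0 < b) (hσ : 0 < σ) :
    0 < 1 - Real.exp (-(b * σ)) := by
  have : Real.exp (-(b * σ)) < Real.exp 0 := Real.exp_lt_exp.mpr (by nlinarith)
  rw [Real.exp_zero] at this; linarith

lemma abs_lower (b σ τ : ℝ) (hb : 0 < b) (hσ : 0 < σ) :
    1 - Real.exp (-(b * σ))
      ≤ ‖1 - Complex.exp (-(b : ℂ) * ((σ : ℂ) + (τ : ℂ) * Complex.I))‖ := by
  have h := normSq_eq b σ τ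
  have hx : 0 < Real.exp (-(b * σ)) := Real.exp_pos _
  have hc : Real.cos (b * τ) ≤ 1 := Real.cos_le_one _
  have hA : 0 ≤ ‖1 - Complex.exp (-(b : ℂ) * ((σ : ℂ) + (τ : ℂ) * Complex.I))‖ :=
    norm_nonneg _
  have h1 : 0 < 1 - Real.exp (-(b * σ)) := one_sub_exp_pos hb hσ
  nlinarith

set_option maxHeartbeats 1000000 in
lemma abs_lower_good (b σ τ : ℝ) (hb : 1 ≤ b) (hσ : 0 < σ) (hbσ : b * σ ≤ 1 / 13)
    (hτ : |τ| ≤ 2 * π * σ) :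
    (1 - Real.exp (-(b * σ))) * Real.exp (τ ^ 2 / (3200 * σ ^ 2))
      ≤ ‖1 - Complex.exp (-(b : ℂ) * ((σ : ℂ) + (τ : ℂ) * Complex.I))‖ := by
  set x := Real.exp (-(b * σ)) with hxdef
  have hb0 : 0 < b := lt_of_lt_of_le one_pos hb
  have hy0 : 0 < b * σ := mul_pos hb0 hσ
  have h1x : 0 < 1 - x := one_sub_exp_pos hb0 hσ
  have hA : 0 ≤ ‖1 - Complex.exp (-(b : ℂ) * ((σ : ℂ) + (τ : ℂ) * Complex.I))‖ :=
    norm_nonneg _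
  have hsq := normSq_eq b σ τ
  -- x ≥ 1/2
  have hxhalf : (1/2 : ℝ) ≤ x := by
    have := Real.add_one_le_exp (-(b * σ))
    simp only [hxdef]
    linarith
  have hθ : |b * τ| ≤ π := by
    have h1 : |b * τ| = b * |τ| := by rw [abs_mul, abs_of_pos hb0]
    have h2 : b * |τ| ≤ b * (2 * π * σ) := mul_le_mul_of_nonneg_left hτ hb0.le
    have hππ : 0 < π := Real.pi_pos
    nlinarith
  have hcos2 : 2 / π ^ 2 * (b * τ) ^ 2 ≤ 1 - Real.cos (b * τ) := by
    have := Real.cos_le_one_sub_mul_cos_sq hθ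
    linarith
  have h1xle : 1 - x ≤ b * σ := by
    have := Real.add_one_le_exp (-(b * σ))
    simp only [hxdef]
    linarith
  have hτσ : τ ^ 2 ≤ 4 * π ^ 2 * σ ^ 2 := by
    have h1 : 0 ≤ |τ| := abs_nonneg τ
    have h2 : 0 < 2 * π * σ := by positivity
    nlinarith [_root_.sq_abs τ]
  set v : ℝ := τ ^ 2 / (1600 * σ ^ 2) with hvdef
  have hv0 : 0 ≤ v := by positivity
  have hv1 : v ≤ 1 := by
    rw [hvdef, div_le_one (by positivity)]
    have hπ2 : π ^ 2 ≤ 16 := by nlinarith [Real.pi_le_four, Real.pi_pos]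
    nlinarith [mul_le_mul_of_nonneg_right hπ2 (sq_nonneg σ)]
  have hev : Real.exp v ≤ 1 + 2 * v := exp_le_one_add_two_mul hv0 hv1
  have hexpsq : ((1 - x) * Real.exp (τ ^ 2 / (3200 * σ ^ 2))) ^ 2
      = (1 - x) ^ 2 * Real.exp v := by
    rw [mul_pow, sq (Real.exp _), ← Real.exp_add, hvdef]
    congr 2
    field_simp
    ring
  have key : ((1 - x) * Real.exp (τ ^ 2 / (3200 * σ ^ 2))) ^ 2
      ≤ (‖1 - Complex.exp (-(b : ℂ) * ((σ : ℂ) + (τ : ℂ) * Complex.I))‖) ^ 2 := by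
    rw [hexpsq, hsq]
    have e1 : (1 - x) ^ 2 * Real.exp v ≤ (1 - x) ^ 2 * (1 + 2 * v) :=
      mul_le_mul_of_nonneg_left hev (sq_nonneg _)
    have e3 : 2 * v * (1 - x) ^ 2 ≤ 2 * v * (b * σ) ^ 2 := by
      apply mul_le_mul_of_nonneg_left _ (by positivity)
      nlinarith
    have e2 : (1 - x) ^ 2 * (1 + 2 * v) = (1 - x) ^ 2 + 2 * v * (1 - x) ^ 2 := by ring
    have e4 : 2 * v * (b * σ) ^ 2 = b ^ 2 * τ ^ 2 / 800 := by
      rw [hvdef]; field_simp; ring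
    have hπ0 : 0 < π := Real.pi_pos
    have hπ2 : π ^ 2 ≤ 16 := by nlinarith [Real.pi_le_four, Real.pi_pos]
    have e5 : b ^ 2 * τ ^ 2 / 800 ≤ 2 / π ^ 2 * (b * τ) ^ 2 := by
      have h25 : 2 / π ^ 2 * (b * τ) ^ 2 = 2 * (b * τ) ^ 2 / π ^ 2 := by ring
      rw [h25, div_le_div_iff₀ (by norm_num) (by positivity)]
      nlinarith [sq_nonneg (b * τ), mul_le_mul_of_nonneg_right hπ2 (sq_nonneg (b * τ))]
    have e6 : 2 / π ^ 2 * (b * τ) ^ 2 ≤ 2 * x * (1 - Real.cos (b * τ)) := by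
      have hc1 : 0 ≤ 1 - Real.cos (b * τ) := by linarith [Real.cos_le_one (b * τ)]
      nlinarith
    linarith
  have hL : 0 < (1 - x) * Real.exp (τ ^ 2 / (3200 * σ ^ 2)) := by positivity
  have hfin := Real.sqrt_le_sqrt key
  rwa [Real.sqrt_sq hL.le, Real.sqrt_sq hA] at hfin

lemma cast_pow_eq (k m : ℕ) : ((m + 1 : ℕ) : ℂ) ^ k = ((((m + 1 : ℕ) : ℝ) ^ k : ℝ) : ℂ) := by
  push_cast; ring

lemma abs_exp_term (b : ℝ) (s : ℂ) :
    ‖Complex.exp (-(b : ℂ) * s)‖ = Real.exp (-(b * s.re)) := by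
  rw [Complex.norm_exp]
  congr 1
  simp

lemma b_lower (k : ℕ) (hk : 1 ≤ k) (m : ℕ) : ((m : ℝ) + 1) ≤ ((m + 1 : ℕ) : ℝ) ^ k := by
  have h1 : (1 : ℝ) ≤ ((m + 1 : ℕ) : ℝ) := by exact_mod_cast Nat.one_le_iff_ne_zero.mpr (Nat.succ_ne_zero m)
  have := le_self_pow₀ h1 (Nat.one_le_iff_ne_zero.mp hk)
  push_cast at this ⊢
  linarith

lemma abs_E_lt_one (k : ℕ) (hk : 1 ≤ k) (s : ℂ) (hs : 0 < s.re) (m : ℕ) :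
    ‖Complex.exp (-((m + 1 : ℕ) : ℂ) ^ k * s)‖ < 1 := by
  rw [show -((m + 1 : ℕ) : ℂ) ^ k * s = -((((m + 1 : ℕ) : ℝ) ^ k : ℝ) : ℂ) * s by
    rw [cast_pow_eq], abs_exp_term]
  have hb : (0:ℝ) < ((m + 1 : ℕ) : ℝ) ^ k := by positivity
  have : -(((m + 1 : ℕ) : ℝ) ^ k * s.re) < 0 := by nlinarith
  calc Real.exp (-(((m + 1 : ℕ) : ℝ) ^ k * s.re)) < Real.exp 0 := Real.exp_lt_exp.mpr this
    _ = 1 := Real.exp_zero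

lemma one_sub_E_ne (k : ℕ) (hk : 1 ≤ k) (s : ℂ) (hs : 0 < s.re) (m : ℕ) :
    (1 : ℂ) - Complex.exp (-((m + 1 : ℕ) : ℂ) ^ k * s) ≠ 0 := by
  intro h
  have h1 : Complex.exp (-((m + 1 : ℕ) : ℂ) ^ k * s) = 1 := by
    have := sub_eq_zero.mp h; exact this.symm
  have := abs_E_lt_one k hk s hs m
  rw [h1] at this
  simp at this

lemma arg_ne_pi (k : ℕ) (hk : 1 ≤ k) (s : ℂ) (hs : 0 < s.re) (m : ℕ) :
    ((1 : ℂ) - Complex.exp (-((m + 1 : ℕ) : ℂ) ^ k * s)).arg ≠ π := by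
  intro h
  rw [Complex.arg_eq_pi_iff] at h
  have h1 : (Complex.exp (-((m + 1 : ℕ) : ℂ) ^ k * s)).re
      ≤ ‖Complex.exp (-((m + 1 : ℕ) : ℂ) ^ k * s)‖ := Complex.re_le_norm _
  have h2 := abs_E_lt_one k hk s hs m
  have h3 : ((1 : ℂ) - Complex.exp (-((m + 1 : ℕ) : ℂ) ^ k * s)).re
      = 1 - (Complex.exp (-((m + 1 : ℕ) : ℂ) ^ k * s)).re := by simp
  rw [h3] at h
  linarith [h.1]

lemma summable_log (k : ℕ) (hk : 1 ≤ k) (s : ℂ) (hs : 0 < s.re) :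
    Summable fun m : ℕ =>
      Complex.log ((1 - Complex.exp (-((m + 1 : ℕ) : ℂ) ^ k * s))⁻¹) := by
  set σ := s.re with hσdef
  set K := ⌈1 / σ⌉₊ with hK
  rw [← summable_nat_add_iff K]
  have hgeo : Summable fun j : ℕ => (3 / 2 * Real.exp (-(((K : ℝ) + 1) * σ))) * Real.exp (-σ) ^ j :=
    (summable_geometric_of_lt_one (Real.exp_nonneg _)
      (by rw [Real.exp_lt_one_iff]; linarith)).mul_left _
  apply Summable.of_norm_bounded hgeo
  intro j
  set m := j + K with hm
  have hEabs : ‖Complex.exp (-((m + 1 : ℕ) : ℂ) ^ k * s)‖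
      = Real.exp (-(((m + 1 : ℕ) : ℝ) ^ k * σ)) := by
    rw [show -((m + 1 : ℕ) : ℂ) ^ k * s = -((((m + 1 : ℕ) : ℝ) ^ k : ℝ) : ℂ) * s by
      rw [cast_pow_eq], abs_exp_term]
  have hKσ : 1 ≤ ((K : ℝ) + 1) * σ := by
    have h1 : 1 / σ ≤ (K : ℝ) := Nat.le_ceil _
    rw [div_le_iff₀ hs] at h1
    nlinarith
  have hble : ((m : ℝ) + 1) * σ ≥ ((K : ℝ) + 1) * σ := by
    have : (K : ℝ) ≤ (m : ℝ) := by exact_mod_cast Nat.le_add_left K j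
    nlinarith
  have hEb : Real.exp (-(((m + 1 : ℕ) : ℝ) ^ k * σ)) ≤ Real.exp (-(((m : ℝ) + 1) * σ)) := by
    apply Real.exp_le_exp.mpr
    have := b_lower k hk m
    nlinarith
  have hEhalf : ‖Complex.exp (-((m + 1 : ℕ) : ℂ) ^ k * s)‖ ≤ 1 / 2 := by
    rw [hEabs]
    calc Real.exp (-(((m + 1 : ℕ) : ℝ) ^ k * σ)) ≤ Real.exp (-(((m : ℝ) + 1) * σ)) := hEb
      _ ≤ Real.exp (-1) := Real.exp_le_exp.mpr (by linarith)
      _ ≤ 1 / 2 := by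
          rw [Real.exp_neg]
          have h2 : (2:ℝ) ≤ Real.exp 1 := by
            have := Real.add_one_le_exp (1:ℝ); linarith
          rw [inv_le_comm₀ (Real.exp_pos 1) (by norm_num)]
          linarith
  have hlog : Complex.log ((1 - Complex.exp (-((m + 1 : ℕ) : ℂ) ^ k * s))⁻¹)
      = -Complex.log (1 - Complex.exp (-((m + 1 : ℕ) : ℂ) ^ k * s)) :=
    Complex.log_inv _ (arg_ne_pi k hk s hs m)
  rw [hlog, norm_neg]
  have hrw : (1 : ℂ) - Complex.exp (-((m + 1 : ℕ) : ℂ) ^ k * s)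
      = 1 + -Complex.exp (-((m + 1 : ℕ) : ℂ) ^ k * s) := by ring
  rw [hrw]
  calc ‖Complex.log (1 + -Complex.exp (-((m + 1 : ℕ) : ℂ) ^ k * s))‖
      ≤ 3 / 2 * ‖-Complex.exp (-((m + 1 : ℕ) : ℂ) ^ k * s)‖ := by
        apply Complex.norm_log_one_add_half_le_self
        rw [norm_neg]
        exact hEhalf
    _ ≤ 3 / 2 * Real.exp (-(((K : ℝ) + 1) * σ)) * Real.exp (-σ) ^ j := by
        rw [norm_neg, hEabs]
        have hstep : Real.exp (-(((m : ℝ) + 1) * σ))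
            = Real.exp (-(((K : ℝ) + 1) * σ)) * Real.exp (-σ) ^ j := by
          rw [← Real.exp_nat_mul, ← Real.exp_add]
          congr 1
          have : (m : ℝ) = (j : ℝ) + (K : ℝ) := by rw [hm]; push_cast; ring
          rw [this]; ring
        have := hEb.trans_eq hstep
        nlinarith [Real.exp_nonneg (-(((K : ℝ) + 1) * σ)), pow_nonneg (Real.exp_nonneg (-σ)) j]

lemma summable_relog (k : ℕ) (hk : 1 ≤ k) (s : ℂ) (hs : 0 < s.re) :
    Summable fun m : ℕ =>
      Real.log (‖(1 - Complex.exp (-((m + 1 : ℕ) : ℂ) ^ k * s))⁻¹‖) := by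
  have h := summable_log k hk s hs
  have h2 : Summable fun m : ℕ =>
      (Complex.log ((1 - Complex.exp (-((m + 1 : ℕ) : ℂ) ^ k * s))⁻¹)).re :=
    ⟨_, Complex.hasSum_re h.hasSum⟩
  exact h2.congr fun m => Complex.log_re _

lemma abs_Fk (k : ℕ) (hk : 1 ≤ k) (s : ℂ) (hs : 0 < s.re) :
    ‖Fk k s‖ = Real.exp (∑' m : ℕ,
      Real.log (‖(1 - Complex.exp (-((m + 1 : ℕ) : ℂ) ^ k * s))⁻¹‖)) := by
  have hsum := summable_log k hk s hs
  have hne : ∀ m : ℕ, (1 - Complex.exp (-((m + 1 : ℕ) : ℂ) ^ k * s))⁻¹ ≠ 0 :=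
    fun m => inv_ne_zero (one_sub_E_ne k hk s hs m)
  have hp : HasProd (fun m : ℕ => (1 - Complex.exp (-((m + 1 : ℕ) : ℂ) ^ k * s))⁻¹)
      (Complex.exp (∑' m : ℕ, Complex.log ((1 - Complex.exp (-((m + 1 : ℕ) : ℂ) ^ k * s))⁻¹))) := by
    have h1 := hsum.hasSum.cexp
    have h2 : (Complex.exp ∘ fun m : ℕ =>
        Complex.log ((1 - Complex.exp (-((m + 1 : ℕ) : ℂ) ^ k * s))⁻¹))
        = fun m : ℕ => (1 - Complex.exp (-((m + 1 : ℕ) : ℂ) ^ k * s))⁻¹ :=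
      funext fun m => Complex.exp_log (hne m)
    rwa [h2] at h1
  rw [Fk, hp.tprod_eq, Complex.norm_exp, Complex.re_tsum hsum]
  congr 1
  exact tsum_congr fun m => Complex.log_re _

end FkAux


theorem Fk_major_arc_bound (k : ℕ) (hk : 1 ≤ k) (σ : ℕ → ℝ)
    (hσ : ∀ n : ℕ, 1 ≤ n → 0 < σ n ∧
      ∑' r : ℕ, (wk k (r + 1) : ℝ) * Real.exp (-((r + 1 : ℕ) : ℝ) * σ n) = n) :
    ∃ c : ℝ, 0 < c ∧ ∃ N : ℕ, ∀ n : ℕ, N ≤ n → ∀ τ : ℝ,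
      |τ| ≤ 2 * π * σ n →
      ‖Fk k ((σ n : ℂ) + τ * Complex.I)‖ ≤
        ‖Fk k ((σ n : ℂ))‖ *
          Real.exp (-c * τ ^ 2 * (σ n) ^ (-(2 + 1 / (k : ℝ)))) := by
  have hk1 : (1:ℝ) ≤ (k:ℝ) := by exact_mod_cast hk
  have hkpos : (0:ℝ) < (k:ℝ) := by linarith
  have hknz : (k:ℝ) ≠ 0 := ne_of_gt hkpos
  set σ₀ : ℝ := 1 / (13 * 2 ^ k) with hσ₀def
  have hσ₀pos : 0 < σ₀ := by positivity
  have hCsum : Summable (fun r : ℕ =>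
      ((r + 1 : ℕ) : ℝ) ^ 2 * Real.exp (-((r + 1 : ℕ) : ℝ) * σ₀)) := by
    have h0 : Summable (fun r : ℕ => (r : ℝ) ^ 2 * Real.exp (-σ₀) ^ r) :=
      summable_pow_mul_geometric_of_norm_lt_one 2
        (by rw [Real.norm_eq_abs, abs_of_pos (Real.exp_pos _), Real.exp_lt_one_iff]; linarith)
    have h1 := (summable_nat_add_iff 1).mpr h0
    refine h1.congr fun r => ?_
    rw [← Real.exp_nat_mul]
    congr 2
    push_cast
    ring
  set C := ∑' r : ℕ, ((r + 1 : ℕ) : ℝ) ^ 2 * Real.exp (-((r + 1 : ℕ) : ℝ) * σ₀) with hCdef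
  refine ⟨1/83200, by norm_num, max 1 (⌈C⌉₊ + 1), ?_⟩
  intro n hn τ hτ
  have hn1 : 1 ≤ n := le_trans (le_max_left _ _) hn
  obtain ⟨hσpos, hsum_n⟩ := hσ n hn1
  set σn := σ n with hσn
  have hσle : σn ≤ σ₀ := by
    by_contra hcon
    push_neg at hcon
    have hbound : ∀ r : ℕ, (wk k (r+1) : ℝ) * Real.exp (-((r + 1 : ℕ) : ℝ) * σn)
        ≤ ((r + 1 : ℕ) : ℝ) ^ 2 * Real.exp (-((r + 1 : ℕ) : ℝ) * σ₀) := by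
      intro r
      have h1 : (wk k (r+1) : ℝ) ≤ ((r + 1 : ℕ) : ℝ) ^ 2 := by
        have h := FkAux.wk_le_sq k (r+1)
        have : ((wk k (r+1) : ℕ) : ℝ) ≤ (((r+1)^2 : ℕ) : ℝ) := by exact_mod_cast h
        push_cast at this ⊢
        linarith
      have h2 : Real.exp (-((r + 1 : ℕ) : ℝ) * σn) ≤ Real.exp (-((r + 1 : ℕ) : ℝ) * σ₀) := by
        apply Real.exp_le_exp.mpr
        have hr1 : (0:ℝ) < ((r+1 : ℕ):ℝ) := by positivity
        nlinarith
      have h3 : (0:ℝ) ≤ (wk k (r+1) : ℝ) := by positivity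
      nlinarith [Real.exp_nonneg (-((r + 1 : ℕ) : ℝ) * σn),
        Real.exp_nonneg (-((r + 1 : ℕ) : ℝ) * σ₀), sq_nonneg ((r+1:ℕ):ℝ)]
    have hsummable : Summable (fun r : ℕ =>
        (wk k (r+1) : ℝ) * Real.exp (-((r + 1 : ℕ) : ℝ) * σn)) :=
      Summable.of_nonneg_of_le (fun r => by positivity) hbound hCsum
    have hle : (n:ℝ) ≤ C := by
      rw [← hsum_n]
      exact Summable.tsum_le_tsum hbound hsummable hCsum
    have hge : (⌈C⌉₊ + 1 : ℕ) ≤ n := le_trans (le_max_right _ _) hn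
    have hlt : C < (n:ℝ) := by
      have h4 : C ≤ (⌈C⌉₊:ℝ) := Nat.le_ceil C
      have h5 : ((⌈C⌉₊:ℕ):ℝ) + 1 ≤ (n:ℝ) := by exact_mod_cast hge
      linarith
    linarith
  -- the cut-off M
  set y : ℝ := 1 / (13 * σn) with hydef
  have hy0 : 0 < y := by positivity
  set R : ℝ := y ^ ((1:ℝ)/(k:ℝ)) with hRdef
  have hR0 : (0:ℝ) ≤ R := Real.rpow_nonneg hy0.le _
  set M := ⌊R⌋₊ with hMdef
  have hMR : (M:ℝ) ≤ R := Nat.floor_le hR0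
  have hRM : R ≤ (M:ℝ) + 1 := le_of_lt (Nat.lt_floor_add_one R)
  have h2k : (2:ℝ)^(k:ℕ) ≤ y := by
    rw [hydef, le_div_iff₀ (by positivity)]
    have h2kpos : (0:ℝ) < (2:ℝ)^(k:ℕ) := by positivity
    have hm1 := mul_le_mul_of_nonneg_left hσle (by positivity : (0:ℝ) ≤ (2:ℝ)^(k:ℕ) * 13)
    calc (2:ℝ)^(k:ℕ) * (13*σn) = ((2:ℝ)^(k:ℕ)*13)*σn := by ring
      _ ≤ ((2:ℝ)^(k:ℕ)*13) * σ₀ := hm1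
      _ = 1 := by rw [hσ₀def]; field_simp
  have hR2 : (2:ℝ) ≤ R := by
    have step : ((2:ℝ)^(k:ℕ)) ^ ((1:ℝ)/(k:ℝ)) ≤ R :=
      Real.rpow_le_rpow (by positivity) h2k (by positivity)
    rwa [← Real.rpow_natCast (2:ℝ) k, ← Real.rpow_mul (by norm_num : (0:ℝ) ≤ 2),
      mul_one_div, div_self hknz, Real.rpow_one] at step
  have hRk : R ^ (k:ℕ) = y := by
    rw [hRdef, ← Real.rpow_natCast (y ^ ((1:ℝ)/(k:ℝ))) k, ← Real.rpow_mul hy0.le,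
      one_div, inv_mul_cancel₀ hknz, Real.rpow_one]
  have hbM : ∀ m : ℕ, m < M → ((m + 1 : ℕ) : ℝ)^k * σn ≤ 1/13 := by
    intro m hm
    have h1 : ((m+1 : ℕ):ℝ) ≤ (M:ℝ) := by exact_mod_cast Nat.succ_le_of_lt hm
    have h2 : ((m+1:ℕ):ℝ) ≤ R := le_trans h1 hMR
    have h3 : ((m+1:ℕ):ℝ)^k ≤ R^(k:ℕ) := pow_le_pow_left₀ (by positivity) h2 k
    rw [hRk, hydef] at h3
    calc ((m+1:ℕ):ℝ)^k * σn ≤ (1/(13*σn)) * σn := mul_le_mul_of_nonneg_right h3 hσpos.le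
      _ = 1/13 := by field_simp
  have hb1 : ∀ m : ℕ, (1:ℝ) ≤ ((m+1:ℕ):ℝ)^k := by
    intro m
    have h1 : (1:ℝ) ≤ ((m + 1 : ℕ) : ℝ) := by exact_mod_cast Nat.one_le_iff_ne_zero.mpr (Nat.succ_ne_zero m)
    exact one_le_pow₀ h1
  have h1x : ∀ m : ℕ, 0 < 1 - Real.exp (-(((m+1:ℕ):ℝ)^k * σn)) := fun m =>
    FkAux.one_sub_exp_pos (lt_of_lt_of_le one_pos (hb1 m)) hσpos
  -- rewrite goal
  have hsre : ((σn:ℂ) + (τ:ℂ) * Complex.I).re = σn := by simp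
  rw [FkAux.abs_Fk k hk ((σn:ℂ) + (τ:ℂ) * Complex.I) (by rw [hsre]; exact hσpos),
    FkAux.abs_Fk k hk ((σn:ℂ)) (by simpa using hσpos), ← Real.exp_add, Real.exp_le_exp]
  have S0 := FkAux.summable_relog k hk ((σn:ℂ)) (by simpa using hσpos)
  have Sτ := FkAux.summable_relog k hk ((σn:ℂ) + (τ:ℂ) * Complex.I) (by rw [hsre]; exact hσpos)
  have hG0 : ∀ m : ℕ, Real.log (‖(1 - Complex.exp (-((m + 1 : ℕ) : ℂ) ^ k * ((σn:ℂ))))⁻¹‖)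
      = -Real.log (1 - Real.exp (-(((m+1:ℕ):ℝ)^k * σn))) := by
    intro m
    have hc : -((m + 1 : ℕ) : ℂ) ^ k * ((σn:ℂ)) = ((-(((m+1:ℕ):ℝ)^k * σn) : ℝ) : ℂ) := by
      rw [FkAux.cast_pow_eq]
      push_cast
      ring
    rw [hc, ← Complex.ofReal_exp,
      show (1:ℂ) - ((Real.exp (-(((m+1:ℕ):ℝ)^k * σn)) : ℝ):ℂ)
        = ((1 - Real.exp (-(((m+1:ℕ):ℝ)^k * σn)) : ℝ):ℂ) by push_cast; ring,
      norm_inv, Complex.norm_real, Real.norm_eq_abs, abs_of_pos (h1x m), Real.log_inv]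
  have hGτ : ∀ m : ℕ, Real.log (‖(1 - Complex.exp (-((m + 1 : ℕ) : ℂ) ^ k * ((σn:ℂ) + (τ:ℂ) * Complex.I)))⁻¹‖)
      = -Real.log (‖1 - Complex.exp
          (-((((m+1:ℕ):ℝ)^k : ℝ):ℂ) * ((σn:ℂ) + (τ:ℂ) * Complex.I))‖) := by
    intro m
    rw [FkAux.cast_pow_eq, norm_inv, Real.log_inv]
  have hdiff : ∀ m : ℕ,
      Real.log (‖(1 - Complex.exp (-((m + 1 : ℕ) : ℂ) ^ k * ((σn:ℂ))))⁻¹‖)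
      - Real.log (‖(1 - Complex.exp (-((m + 1 : ℕ) : ℂ) ^ k * ((σn:ℂ) + (τ:ℂ) * Complex.I)))⁻¹‖)
      = Real.log (‖1 - Complex.exp
          (-((((m+1:ℕ):ℝ)^k : ℝ):ℂ) * ((σn:ℂ) + (τ:ℂ) * Complex.I))‖)
        - Real.log (1 - Real.exp (-(((m+1:ℕ):ℝ)^k * σn))) := by
    intro m
    rw [hG0 m, hGτ m]
    ring
  have hnonneg : ∀ m : ℕ, 0 ≤
      Real.log (‖(1 - Complex.exp (-((m + 1 : ℕ) : ℂ) ^ k * ((σn:ℂ))))⁻¹‖)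
      - Real.log (‖(1 - Complex.exp (-((m + 1 : ℕ) : ℂ) ^ k * ((σn:ℂ) + (τ:ℂ) * Complex.I)))⁻¹‖) := by
    intro m
    rw [hdiff m]
    have hlow := FkAux.abs_lower (((m+1:ℕ):ℝ)^k) σn τ (lt_of_lt_of_le one_pos (hb1 m)) hσpos
    have := Real.log_le_log (h1x m) hlow
    linarith
  have hgood : ∀ m : ℕ, m < M → τ^2/(3200*σn^2) ≤
      Real.log (‖(1 - Complex.exp (-((m + 1 : ℕ) : ℂ) ^ k * ((σn:ℂ))))⁻¹‖)
      - Real.log (‖(1 - Complex.exp (-((m + 1 : ℕ) : ℂ) ^ k * ((σn:ℂ) + (τ:ℂ) * Complex.I)))⁻¹‖) := by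
    intro m hm
    rw [hdiff m]
    have hlow := FkAux.abs_lower_good (((m+1:ℕ):ℝ)^k) σn τ (hb1 m) hσpos (hbM m hm) hτ
    have hlog := Real.log_le_log (mul_pos (h1x m) (Real.exp_pos _)) hlow
    rw [Real.log_mul (ne_of_gt (h1x m)) (Real.exp_ne_zero _), Real.log_exp] at hlog
    linarith
  -- final arithmetic
  have hX : σn ^ (-(2 + 1/(k:ℝ))) = (σn^2)⁻¹ * σn ^ (-(1/(k:ℝ))) := by
    rw [show -(2 + 1/(k:ℝ)) = (-2 : ℝ) + (-(1/(k:ℝ))) by ring, Real.rpow_add hσpos]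
    congr 1
    rw [Real.rpow_neg hσpos.le]
    congr 1
    rw [show ((2:ℝ)) = ((2:ℕ):ℝ) by norm_num, Real.rpow_natCast]
  have hkey2 : σn ^ (-(1/(k:ℝ))) = (13:ℝ)^((1:ℝ)/(k:ℝ)) * R := by
    rw [hRdef, hydef, ← Real.mul_rpow (by norm_num : (0:ℝ) ≤ 13) (by positivity),
      show (13:ℝ) * (1/(13*σn)) = σn⁻¹ by field_simp,
      Real.inv_rpow hσpos.le, ← Real.rpow_neg hσpos.le]
  have h13 : (13:ℝ)^((1:ℝ)/(k:ℝ)) ≤ 13 := by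
    calc (13:ℝ)^((1:ℝ)/(k:ℝ)) ≤ (13:ℝ)^(1:ℝ) :=
          Real.rpow_le_rpow_of_exponent_le (by norm_num)
            (by rw [div_le_one hkpos]; exact hk1)
      _ = 13 := Real.rpow_one _
  have hP : σn ^ (-(1/(k:ℝ))) ≤ 26 * (M:ℝ) := by
    rw [hkey2]
    have hR2M : R ≤ 2*(M:ℝ) := by linarith
    calc (13:ℝ)^((1:ℝ)/(k:ℝ)) * R ≤ 13 * R := mul_le_mul_of_nonneg_right h13 hR0
      _ ≤ 13 * (2*(M:ℝ)) := by linarith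
      _ = 26 * (M:ℝ) := by ring
  have key : (1/83200)*τ^2*σn ^ (-(2 + 1/(k:ℝ))) ≤
      (∑' m : ℕ, Real.log (‖(1 - Complex.exp (-((m + 1 : ℕ) : ℂ) ^ k * ((σn:ℂ))))⁻¹‖))
      - (∑' m : ℕ, Real.log (‖(1 - Complex.exp (-((m + 1 : ℕ) : ℂ) ^ k * ((σn:ℂ) + (τ:ℂ) * Complex.I)))⁻¹‖)) := by
    rw [← Summable.tsum_sub S0 Sτ]
    calc (1/83200)*τ^2*σn ^ (-(2 + 1/(k:ℝ)))
        = (τ^2*(σn^2)⁻¹/83200)*(σn ^ (-(1/(k:ℝ)))) := by rw [hX]; ring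
      _ ≤ (τ^2*(σn^2)⁻¹/83200)*(26*(M:ℝ)) := mul_le_mul_of_nonneg_left hP (by positivity)
      _ = (M:ℝ)*(τ^2/(3200*σn^2)) := by ring
      _ = ∑ _m ∈ Finset.range M, τ^2/(3200*σn^2) := by
          rw [Finset.sum_const, Finset.card_range, nsmul_eq_mul]
      _ ≤ ∑ m ∈ Finset.range M, (Real.log (‖(1 - Complex.exp (-((m + 1 : ℕ) : ℂ) ^ k * ((σn:ℂ))))⁻¹‖)
          - Real.log (‖(1 - Complex.exp (-((m + 1 : ℕ) : ℂ) ^ k * ((σn:ℂ) + (τ:ℂ) * Complex.I)))⁻¹‖)) :=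
          Finset.sum_le_sum fun m hm => hgood m (Finset.mem_range.mp hm)
      _ ≤ ∑' m : ℕ, (Real.log (‖(1 - Complex.exp (-((m + 1 : ℕ) : ℂ) ^ k * ((σn:ℂ))))⁻¹‖)
          - Real.log (‖(1 - Complex.exp (-((m + 1 : ℕ) : ℂ) ^ k * ((σn:ℂ) + (τ:ℂ) * Complex.I)))⁻¹‖)) :=
          Summable.sum_le_tsum _ (fun m _ => hnonneg m) (S0.sub Sτ)
  linarith
end

section
/- For real σ > 0 and |τ| ≤ 2πσ, the sum S(τ;σ) := ∑_{(4σ)^{-1/k} < m ≤ (2σ)^{-1/k}} ‖m^k τ/(2π)‖² equals ∑_{(4σ)^{-1/k} < m ≤ (2σ)^{-1/k}} m^{2k} τ²/(4π²), and there exist constants 0 < c ≤ C depending only on k such that c·τ² σ^{-(2+1/k)} ≤ S(τ;σ) ≤ C·τ² σ^{-(2+1/k)} for all sufficiently small σ. -/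
open Real

open Classical in
/-- `S(τ;σ) = ∑_{(4σ)^{-1/k} < m ≤ (2σ)^{-1/k}} ‖m^k τ/(2π)‖²`. -/
noncomputable def Ssum (k : ℕ) (τ σ : ℝ) : ℝ :=
  ∑ m ∈ Finset.Icc 1 ⌊(2 * σ) ^ (-(1 : ℝ) / k)⌋₊,
    if (4 * σ) ^ (-(1 : ℝ) / k) < (m : ℝ) then
      distNearestInt ((m : ℝ) ^ k * τ / (2 * π)) ^ 2
    else 0

lemma dni_sq {x : ℝ} (hx : |x| ≤ 1/2) : distNearestInt x ^ 2 = x ^ 2 := by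
  unfold distNearestInt
  rw [sq_abs]
  obtain ⟨h1, h2⟩ := abs_le.1 hx
  rcases lt_or_eq_of_le h2 with h | h
  · rw [round_eq_zero_iff.2 ⟨h1, h⟩]
    norm_num
  · subst h
    norm_num [round_eq]

open Classical in
theorem Ssum_eval (k : ℕ) (hk : 1 ≤ k) :
    (∀ σ : ℝ, 0 < σ → ∀ τ : ℝ, |τ| ≤ 2 * π * σ →
      Ssum k τ σ =
        ∑ m ∈ Finset.Icc 1 ⌊(2 * σ) ^ (-(1 : ℝ) / k)⌋₊,
          if (4 * σ) ^ (-(1 : ℝ) / k) < (m : ℝ) then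
            (m : ℝ) ^ (2 * k) * τ ^ 2 / (4 * π ^ 2)
          else 0) ∧
    ∃ c C : ℝ, 0 < c ∧ c ≤ C ∧ ∃ σ₀ : ℝ, 0 < σ₀ ∧
      ∀ σ : ℝ, 0 < σ → σ < σ₀ → ∀ τ : ℝ, |τ| ≤ 2 * π * σ →
        c * τ ^ 2 * σ ^ (-(2 + 1 / (k : ℝ))) ≤ Ssum k τ σ ∧
        Ssum k τ σ ≤ C * τ ^ 2 * σ ^ (-(2 + 1 / (k : ℝ))) := by
  have hkR : (0:ℝ) < (k:ℝ) := by exact_mod_cast hk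
  have hkne : (k:ℝ) ≠ 0 := ne_of_gt hkR
  have hπ := Real.pi_pos
  -- Part 1
  have part1 : ∀ σ : ℝ, 0 < σ → ∀ τ : ℝ, |τ| ≤ 2 * π * σ →
      Ssum k τ σ =
        ∑ m ∈ Finset.Icc 1 ⌊(2 * σ) ^ (-(1 : ℝ) / k)⌋₊,
          if (4 * σ) ^ (-(1 : ℝ) / k) < (m : ℝ) then
            (m : ℝ) ^ (2 * k) * τ ^ 2 / (4 * π ^ 2)
          else 0 := by
    intro σ hσ τ hτ
    unfold Ssum
    refine Finset.sum_congr rfl ?_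
    intro m hm
    by_cases h : (4 * σ) ^ (-(1 : ℝ) / k) < (m : ℝ)
    · rw [if_pos h, if_pos h]
      have hm2 : (m:ℝ) ≤ (2*σ) ^ (-(1:ℝ)/k) := by
        have h1 := (Finset.mem_Icc.1 hm).2
        calc (m:ℝ) ≤ (⌊(2*σ) ^ (-(1:ℝ)/k)⌋₊ : ℝ) := by exact_mod_cast h1
          _ ≤ _ := Nat.floor_le (Real.rpow_nonneg (by positivity) _)
      have hmk : (m:ℝ)^k ≤ (2*σ)⁻¹ := by
        calc (m:ℝ)^k ≤ ((2*σ) ^ (-(1:ℝ)/k))^k :=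
              pow_le_pow_left₀ (Nat.cast_nonneg m) hm2 k
          _ = (2*σ)⁻¹ := by
              rw [← Real.rpow_natCast ((2*σ) ^ (-(1:ℝ)/k)) k,
                ← Real.rpow_mul (by positivity),
                show -(1:ℝ)/k * k = -1 by field_simp,
                Real.rpow_neg_one]
      have habs : |(m:ℝ)^k * τ / (2*π)| ≤ 1/2 := by
        rw [abs_div, abs_mul, abs_of_nonneg (by positivity : (0:ℝ) ≤ (m:ℝ)^k),
          abs_of_pos (by positivity : (0:ℝ) < 2*π), div_le_iff₀ (by positivity)]
        calc (m:ℝ)^k * |τ| ≤ (2*σ)⁻¹ * (2*π*σ) :=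
              mul_le_mul hmk hτ (abs_nonneg τ) (by positivity)
          _ = 1/2 * (2*π) := by field_simp
      rw [dni_sq habs, show 2*k = k*2 from mul_comm 2 k, pow_mul]
      field_simp
      ring
    · rw [if_neg h, if_neg h]
  refine ⟨part1, ?_⟩
  set ε : ℝ := 1 - 2 ^ (-(1:ℝ)/(k:ℝ)) with hεdef
  have h2pos : (0:ℝ) < 2 ^ (-(1:ℝ)/(k:ℝ)) := Real.rpow_pos_of_pos (by norm_num) _
  have h2lt1 : (2:ℝ) ^ (-(1:ℝ)/(k:ℝ)) < 1 := by
    apply Real.rpow_lt_one_of_one_lt_of_neg (by norm_num)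
    have : 0 < 1/(k:ℝ) := by positivity
    rw [neg_div]
    linarith
  have hεpos : 0 < ε := by rw [hεdef]; linarith
  have hεlt1 : ε < 1 := by rw [hεdef]; linarith
  refine ⟨ε * 2 ^ (-(1:ℝ)/(k:ℝ)) / (128*π^2), 1/(4*π^2), by positivity, ?_,
    (ε/2)^k / 2, by positivity, ?_⟩
  · apply div_le_div₀ zero_le_one ?_ (by positivity) (by nlinarith [sq_nonneg π])
    nlinarith
  intro σ hσ0 hσlt τ hτ
  set A := (4*σ) ^ (-(1:ℝ)/(k:ℝ)) with hA
  set B := (2*σ) ^ (-(1:ℝ)/(k:ℝ)) with hB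
  have hA0 : 0 < A := Real.rpow_pos_of_pos (by positivity) _
  have hB0 : 0 < B := Real.rpow_pos_of_pos (by positivity) _
  have hABrel : A = 2 ^ (-(1:ℝ)/(k:ℝ)) * B := by
    rw [hA, hB, show (4:ℝ)*σ = 2*(2*σ) by ring,
      Real.mul_rpow (by norm_num) (by positivity)]
  have hAB : A ≤ B := by nlinarith
  -- εB ≥ 2
  have hBlarge : 2 ≤ ε * B := by
    have h1 : 2*σ < (ε/2)^k := by linarith
    have h2 : (2*σ) ^ ((1:ℝ)/(k:ℝ)) < ε/2 := by
      calc (2*σ) ^ ((1:ℝ)/(k:ℝ)) < ((ε/2)^k) ^ ((1:ℝ)/(k:ℝ)) :=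
            Real.rpow_lt_rpow (by positivity) h1 (by positivity)
        _ = ε/2 := by
            rw [← Real.rpow_natCast (ε/2) k, ← Real.rpow_mul (by positivity),
              show (k:ℝ) * (1/(k:ℝ)) = 1 by field_simp, Real.rpow_one]
    have h3 : B = ((2*σ) ^ ((1:ℝ)/(k:ℝ)))⁻¹ := by
      rw [hB, neg_div, Real.rpow_neg (by positivity)]
    have h4 : 2/ε < B := by
      rw [h3]
      have hx : (0:ℝ) < (2*σ) ^ ((1:ℝ)/(k:ℝ)) := Real.rpow_pos_of_pos (by positivity) _
      have := one_div_lt_one_div_of_lt hx h2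
      rw [one_div, one_div] at this
      calc 2/ε = (ε/2)⁻¹ := (inv_div ε 2).symm
        _ < _ := this
    calc (2:ℝ) = ε * (2/ε) := by field_simp
      _ ≤ ε * B := by nlinarith
  -- rewrite the sum as a clean sum over Ioc
  have hset : (Finset.Icc 1 ⌊B⌋₊).filter (fun m : ℕ => A < (m:ℝ)) = Finset.Ioc ⌊A⌋₊ ⌊B⌋₊ := by
    ext m
    simp only [Finset.mem_filter, Finset.mem_Icc, Finset.mem_Ioc, Nat.floor_lt hA0.le]
    constructor
    · rintro ⟨⟨_, hm2⟩, hm3⟩; exact ⟨hm3, hm2⟩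
    · rintro ⟨hm1, hm2⟩
      refine ⟨⟨?_, hm2⟩, hm1⟩
      have h0 : (0:ℝ) < (m:ℝ) := hA0.trans hm1
      exact Nat.cast_pos.1 h0
  have hfact : Ssum k τ σ = τ^2/(4*π^2) * ∑ m ∈ Finset.Ioc ⌊A⌋₊ ⌊B⌋₊, (m:ℝ)^(2*k) := by
    rw [part1 σ hσ0 τ hτ, ← hset, Finset.mul_sum, Finset.sum_filter]
    refine Finset.sum_congr rfl fun m _ => ?_
    split_ifs with h
    · ring
    · rfl
  set T := ∑ m ∈ Finset.Ioc ⌊A⌋₊ ⌊B⌋₊, (m:ℝ)^(2*k) with hT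
  have hBfloor : (⌊B⌋₊:ℝ) ≤ B := Nat.floor_le hB0.le
  have hcard : (Finset.Ioc ⌊A⌋₊ ⌊B⌋₊).card = ⌊B⌋₊ - ⌊A⌋₊ := Nat.card_Ioc _ _
  have hεexp : -(2 + 1/(k:ℝ)) ≤ 0 := by
    have : 0 < 1/(k:ℝ) := by positivity
    linarith
  -- upper bound on T
  have hTupper : T ≤ σ ^ (-(2 + 1/(k:ℝ))) := by
    have h1 : T ≤ (Finset.Ioc ⌊A⌋₊ ⌊B⌋₊).card • B^(2*k) := by
      refine Finset.sum_le_card_nsmul _ _ _ fun m hm => ?_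
      have hmB : (m:ℝ) ≤ B :=
        le_trans (by exact_mod_cast (Finset.mem_Ioc.1 hm).2) hBfloor
      exact pow_le_pow_left₀ (Nat.cast_nonneg m) hmB _
    rw [nsmul_eq_mul] at h1
    have h2 : ((Finset.Ioc ⌊A⌋₊ ⌊B⌋₊).card : ℝ) ≤ B := by
      rw [hcard]
      calc ((⌊B⌋₊ - ⌊A⌋₊ : ℕ):ℝ) ≤ (⌊B⌋₊:ℝ) := by exact_mod_cast Nat.sub_le _ _
        _ ≤ B := hBfloor
    have h3 : T ≤ B * B^(2*k) :=
      h1.trans (mul_le_mul_of_nonneg_right h2 (by positivity))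
    have h4 : B * B^(2*k) = (2*σ) ^ (-(2 + 1/(k:ℝ))) := by
      rw [← pow_succ', hB, ← Real.rpow_natCast _ (2*k+1),
        ← Real.rpow_mul (by positivity)]
      congr 1
      push_cast
      field_simp
    have h5 : (2*σ) ^ (-(2 + 1/(k:ℝ))) ≤ σ ^ (-(2 + 1/(k:ℝ))) :=
      Real.rpow_le_rpow_of_nonpos hσ0 (by linarith) hεexp
    linarith [h4 ▸ h3]
  -- lower bound on T
  have hTlower : ε * 2 ^ (-(1:ℝ)/(k:ℝ)) / 32 * σ ^ (-(2 + 1/(k:ℝ))) ≤ T := by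
    have hfl : ⌊A⌋₊ ≤ ⌊B⌋₊ := Nat.floor_le_floor hAB
    have hcardR : ((Finset.Ioc ⌊A⌋₊ ⌊B⌋₊).card : ℝ) = (⌊B⌋₊:ℝ) - (⌊A⌋₊:ℝ) := by
      rw [hcard, Nat.cast_sub hfl]
    have hcard_ge : ε * B / 2 ≤ ((Finset.Ioc ⌊A⌋₊ ⌊B⌋₊).card : ℝ) := by
      rw [hcardR]
      have hBf : B - 1 < (⌊B⌋₊:ℝ) := Nat.sub_one_lt_floor B
      have hAf : (⌊A⌋₊:ℝ) ≤ A := Nat.floor_le hA0.le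
      have hdiff : B - A = ε * B := by rw [hABrel, hεdef]; ring
      nlinarith
    have h1 : (Finset.Ioc ⌊A⌋₊ ⌊B⌋₊).card • A^(2*k) ≤ T := by
      refine Finset.card_nsmul_le_sum _ _ _ fun m hm => ?_
      have h := (Finset.mem_Ioc.1 hm).1
      have hAm : A ≤ (m:ℝ) := le_of_lt ((Nat.floor_lt hA0.le).1 h)
      exact pow_le_pow_left₀ hA0.le hAm _
    rw [nsmul_eq_mul] at h1
    have h2 : ε * B / 2 * A^(2*k) ≤ T :=
      le_trans (mul_le_mul_of_nonneg_right hcard_ge (by positivity)) h1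
    have hA2k : A^(2*k) = (1/16) * σ ^ (-(2:ℝ)) := by
      rw [hA, ← Real.rpow_natCast _ (2*k), ← Real.rpow_mul (by positivity),
        show (-(1:ℝ)/(k:ℝ)) * ((2*k : ℕ):ℝ) = (-2:ℝ) by push_cast; field_simp,
        Real.mul_rpow (by norm_num) hσ0.le]
      congr 1
      rw [show (-2:ℝ) = ((-2:ℤ):ℝ) by norm_num, Real.rpow_intCast]
      norm_num
    have hBval : B = 2 ^ (-(1:ℝ)/(k:ℝ)) * σ ^ (-(1:ℝ)/(k:ℝ)) := by
      rw [hB, Real.mul_rpow (by norm_num) hσ0.le]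
    have hsplit : σ ^ (-(2 + 1/(k:ℝ))) = σ ^ (-(1:ℝ)/(k:ℝ)) * σ ^ (-(2:ℝ)) := by
      rw [← Real.rpow_add hσ0]
      congr 1
      ring
    calc ε * 2 ^ (-(1:ℝ)/(k:ℝ)) / 32 * σ ^ (-(2 + 1/(k:ℝ)))
        = ε * B / 2 * A^(2*k) := by rw [hA2k, hBval, hsplit]; ring
      _ ≤ T := h2
  rw [hfact]
  constructor
  · calc ε * 2 ^ (-(1:ℝ)/(k:ℝ)) / (128*π^2) * τ^2 * σ ^ (-(2 + 1/(k:ℝ)))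
        = τ^2/(4*π^2) * (ε * 2 ^ (-(1:ℝ)/(k:ℝ)) / 32 * σ ^ (-(2 + 1/(k:ℝ)))) := by ring
      _ ≤ τ^2/(4*π^2) * T := by
          exact mul_le_mul_of_nonneg_left hTlower (by positivity)
  · calc τ^2/(4*π^2) * T ≤ τ^2/(4*π^2) * σ ^ (-(2 + 1/(k:ℝ))) :=
          mul_le_mul_of_nonneg_left hTupper (by positivity)
      _ = 1/(4*π^2) * τ^2 * σ ^ (-(2 + 1/(k:ℝ))) := by ring
end
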